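/- Suppose complex numbers ω₁₁, ω₁₃, ω₁₅, ω₃₃, ω₃₅ satisfy: (i) |2ω₁₃ − ω₁₁²| ≤ 1; (ii) for all x₁, x₃ ∈ ℂ, |ω₁₁x₁ + ω₁₃x₃|² + 3|ω₁₃x₁ + ω₃₃x₃|² + 5|ω₁₅x₁ + ω₃₅x₃|² ≤ |x₁|² + |x₃|²/3; (iii) 3ω₁₅ − 3ω₁₁ω₁₃ + ω₁₁³ = 3ω₃₃. Then |−2ω₁₃(4ω₁₃² − ω₁₁⁴) − (2ω₃₃ − (2/3)ω₁₁³)² + (2ω₃₅ + 5ω₁₅²)(2ω₁₃ − ω₁₁²)| ≤ (32 + √285)/15. -/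

import Mathlib

set_option maxHeartbeats 1000000 in
theorem H31_bound_grunsky (ω11 ω13 ω15 ω33 ω35 : ℂ)
    (h1 : ‖2*ω13 - ω11^2‖ ≤ 1)
    (h2 : ∀ x1 x3 : ℂ,
      ‖ω11*x1 + ω13*x3‖^2 + 3*‖ω13*x1 + ω33*x3‖^2 +
        5*‖ω15*x1 + ω35*x3‖^2 ≤ ‖x1‖^2 + ‖x3‖^2 / 3)
    (h3 : 3*ω15 - 3*ω11*ω13 + ω11^3 = 3*ω33) :
    ‖-2*ω13*(4*ω13^2 - ω11^4) - (2*ω33 - (2/3)*ω11^3)^2 +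
      (2*ω35 + 5*ω15^2)*(2*ω13 - ω11^2)‖ ≤ (32 + Real.sqrt 285)/15 := by
  have c1 : ‖ω11‖^2 + 3*‖ω13‖^2 + 5*‖ω15‖^2 ≤ 1 := by
    have := h2 1 0; simpa using this
  have c2 : ‖ω13‖^2 + 3*‖ω33‖^2 + 5*‖ω35‖^2 ≤ 1/3 := by
    have := h2 0 1; simpa using this
  have n2 : ‖(2:ℂ)‖ = 2 := by norm_num
  have n2' : ‖(-2:ℂ)‖ = 2 := by norm_num
  have n4 : ‖(4:ℂ)‖ = 4 := by norm_num
  have n5 : ‖(5:ℂ)‖ = 5 := by norm_num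
  set b := ‖ω11‖ with hbdef
  set c := ‖ω13‖ with hcdef
  set d := ‖ω15‖ with hddef
  set e := ‖ω33‖ with hedef
  set f := ‖ω35‖ with hfdef
  have hb : 0 ≤ b := norm_nonneg _
  have hc : 0 ≤ c := norm_nonneg _
  have hd : 0 ≤ d := norm_nonneg _
  have hf : 0 ≤ f := norm_nonneg _
  have hE : (-2*ω13*(4*ω13^2 - ω11^4) - (2*ω33 - (2/3)*ω11^3)^2 +
      (2*ω35 + 5*ω15^2)*(2*ω13 - ω11^2))
      = ((-2*ω13)*((2*ω13 - ω11^2)*(2*ω13 + ω11^2)) - 4*(ω15 - ω11*ω13)^2)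
        + (2*ω35 + 5*ω15^2)*(2*ω13 - ω11^2) := by
    linear_combination (2/3)*(2*ω33 - (2/3)*ω11^3 + 2*ω15 - 2*ω11*ω13) * h3
  rw [hE]
  have hplus : ‖2*ω13 + ω11^2‖ ≤ 2*c + b^2 := by
    calc ‖2*ω13 + ω11^2‖ ≤ ‖2*ω13‖ + ‖ω11^2‖ := norm_add_le _ _
      _ = 2*c + b^2 := by rw [norm_mul, norm_pow, n2]
  have t1 : ‖(-2*ω13)*((2*ω13 - ω11^2)*(2*ω13 + ω11^2))‖ ≤ 2*c*(2*c + b^2) := by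
    rw [norm_mul, norm_mul, norm_mul, n2']
    have hmm : ‖2*ω13 - ω11^2‖ * ‖2*ω13 + ω11^2‖ ≤ 1 * (2*c + b^2) :=
      mul_le_mul h1 hplus (norm_nonneg _) zero_le_one
    rw [one_mul] at hmm
    have h2c : (0:ℝ) ≤ 2*c := by linarith
    exact mul_le_mul_of_nonneg_left hmm h2c
  have t2 : ‖(4*(ω15 - ω11*ω13)^2 : ℂ)‖ ≤ 4*(d + b*c)^2 := by
    rw [norm_mul, norm_pow, n4]
    have hsub : ‖ω15 - ω11*ω13‖ ≤ d + b*c := by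
      calc ‖ω15 - ω11*ω13‖ ≤ ‖ω15‖ + ‖ω11*ω13‖ := norm_sub_le _ _
        _ = d + b*c := by rw [norm_mul]
    have hp : ‖ω15 - ω11*ω13‖^2 ≤ (d + b*c)^2 :=
      pow_le_pow_left₀ (norm_nonneg _) hsub 2
    linarith
  have t3 : ‖(2*ω35 + 5*ω15^2)*(2*ω13 - ω11^2)‖ ≤ 2*f + 5*d^2 := by
    rw [norm_mul]
    have ha : ‖2*ω35 + 5*ω15^2‖ ≤ 2*f + 5*d^2 := by
      calc ‖2*ω35 + 5*ω15^2‖ ≤ ‖2*ω35‖ + ‖5*ω15^2‖ := norm_add_le _ _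
        _ = 2*f + 5*d^2 := by rw [norm_mul, norm_mul, norm_pow, n2, n5]
    have hnn : (0:ℝ) ≤ 2*f + 5*d^2 := by nlinarith
    have hmm := mul_le_mul ha h1 (norm_nonneg _) hnn
    rw [mul_one] at hmm
    exact hmm
  have tri : ‖((-2*ω13)*((2*ω13 - ω11^2)*(2*ω13 + ω11^2)) - 4*(ω15 - ω11*ω13)^2)
        + (2*ω35 + 5*ω15^2)*(2*ω13 - ω11^2)‖
      ≤ 2*c*(2*c + b^2) + 4*(d + b*c)^2 + (2*f + 5*d^2) := by
    have s1 := norm_add_le ((-2*ω13)*((2*ω13 - ω11^2)*(2*ω13 + ω11^2)) - 4*(ω15 - ω11*ω13)^2)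
      ((2*ω35 + 5*ω15^2)*(2*ω13 - ω11^2))
    have s2 := norm_sub_le ((-2*ω13)*((2*ω13 - ω11^2)*(2*ω13 + ω11^2)))
      ((4*(ω15 - ω11*ω13)^2 : ℂ))
    linarith
  have hsqrt : (16:ℝ) ≤ Real.sqrt 285 := by
    have h16 : (16:ℝ) = Real.sqrt 256 := by
      rw [show (256:ℝ) = 16^2 by norm_num, Real.sqrt_sq (by norm_num : (0:ℝ) ≤ 16)]
    rw [h16]
    exact Real.sqrt_le_sqrt (by norm_num)
  have hmain : 2*c*(2*c + b^2) + 4*(d + b*c)^2 + (2*f + 5*d^2) ≤ 16/5 := by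
    nlinarith [sq_nonneg (2*f - 1/2), sq_nonneg e, sq_nonneg (b*c - d), sq_nonneg (b*c + d),
      mul_nonneg (mul_nonneg hb hc) hd, sq_nonneg (1 - b^2), mul_nonneg hc (sq_nonneg b),
      sq_nonneg (c - 1/3), sq_nonneg d, sq_nonneg c, sq_nonneg b]
  linarith
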